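/- Let m ≥ 1 and r ≥ 1, let (W,∇) be a formal connection with pole order m on a free ℂ[[z]]-module W of rank r, and let π : W ⊗_{ℂ[[z]]} ℂ[[w]] → ℂ[[w]] be a ℂ[[w]]-linear map with π∘D = ∇_{ν̃}∘π for some ν̃ ∈ ℂ[[w]], such that the map W → ℂ[[w]], a ↦ π(a⊗1), is bijective. For 0 ≤ k ≤ r−1 set W_k := {a ∈ W : π(a⊗1) ∈ w^k·ℂ[[w]]}. Then: (a) W_k is a ℂ[[z]]-submodule of W with ∇(W_k) ⊆ W_k, free of rank r over ℂ[[z]]; (b) for every x ∈ W_k ⊗_{ℂ[[z]]} ℂ[[w]], the element π(ι(x)) lies in w^k·ℂ[[w]], where ι : W_k ⊗ ℂ[[w]] → W ⊗ ℂ[[w]] is induced by the inclusion; (c) the map ρ_k : W_k ⊗_{ℂ[[z]]} ℂ[[w]] → ℂ[[w]] defined by ρ_k(x) = w^{−k}·π(ι(x)) is surjective and satisfies ρ_k∘D_k = ∇_{ν̃ + k·w^{N−1}}∘ρ_k, where D_k is the induced connection in the frame ω on W_k ⊗ ℂ[[w]] coming from ∇|_{W_k} (this expresses that π induces a quotient intertwining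 ∇|_{W_k} with ∇_{ν + k·dw/w}). -/

import Mathlib

open PowerSeries TensorProduct

noncomputable section

/-- A formal connection with pole order `m` on a `ℂ[[z]]`-module `W`, written in the
trivializing frame `dz/z^m`: an additive map `Dc : W → W` satisfying
`Dc(f • a) = (z^m * f') • a + f • Dc a`. -/
def IsFormalConnection (m : ℕ) {W : Type*} [AddCommGroup W] [Module (PowerSeries ℂ) W]
    (Dc : W →+ W) : Prop :=
  ∀ (f : PowerSeries ℂ) (a : W),
    Dc (f • a) = ((X : PowerSeries ℂ) ^ m * PowerSeries.derivative ℂ f) • a + f • Dc a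

/-- The ring `ℂ[[w]]`, regarded as a `ℂ[[z]]`-algebra via `z = w^r`. -/
def Cw (_r : ℕ) : Type := PowerSeries ℂ

instance (r : ℕ) : CommRing (Cw r) := inferInstanceAs (CommRing (PowerSeries ℂ))

/-- The substitution ring homomorphism `ℂ[[z]] → ℂ[[w]]`, `f(z) ↦ f(w^r)`. -/
noncomputable def substPow (r : ℕ) : PowerSeries ℂ →+* Cw r :=
  if h : 0 < r then
    (HahnSeries.toPowerSeries.toRingHom.comp
      ((HahnSeries.embDomainRingHom (AddMonoidHom.mulLeft r)
          (fun a b hab => Nat.eq_of_mul_eq_mul_left h (by simpa using hab))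
          (fun a b => by
            simp only [AddMonoidHom.coe_mulLeft]
            exact ⟨fun hh => Nat.le_of_mul_le_mul_left hh h,
              fun hh => Nat.mul_le_mul_left _ hh⟩)).comp
        HahnSeries.toPowerSeries.symm.toRingHom))
  else (PowerSeries.C (R := ℂ)).comp (PowerSeries.constantCoeff (R := ℂ))

noncomputable instance (r : ℕ) : Algebra (PowerSeries ℂ) (Cw r) := (substPow r).toAlgebra

/-- The element `w ∈ ℂ[[w]]`. -/
def Cw.w (r : ℕ) : Cw r := (PowerSeries.X : PowerSeries ℂ)

/-- The formal derivative `d/dw` on `ℂ[[w]]`. -/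
noncomputable def Cw.deriv {r : ℕ} (f : Cw r) : Cw r :=
  (PowerSeries.derivative ℂ (show PowerSeries ℂ from f) : PowerSeries ℂ)

/-- The coefficient of `w^n` in an element of `ℂ[[w]]`. -/
noncomputable def Cw.coeff {r : ℕ} (n : ℕ) (f : Cw r) : ℂ :=
  PowerSeries.coeff (R := ℂ) n (show PowerSeries ℂ from f)

private lemma aux_deriv_pow (k : ℕ) :
    PowerSeries.derivative ℂ ((X : PowerSeries ℂ) ^ k) = (k : PowerSeries ℂ) * X ^ (k - 1) := by
  cases k with
  | zero => simp
  | succ n =>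
    rw [Derivation.leibniz_pow]
    simp [nsmul_eq_mul, smul_eq_mul, mul_comm]

private lemma aux_key (n k : ℕ) (u ν : PowerSeries ℂ) :
    (X : PowerSeries ℂ) ^ (n + 1) * PowerSeries.derivative ℂ (X ^ k * u) + ν * (X ^ k * u)
      = X ^ k * (X ^ (n + 1) * PowerSeries.derivative ℂ u + (ν + k • X ^ n) * u) := by
  rw [Derivation.leibniz, smul_eq_mul, smul_eq_mul, aux_deriv_pow, nsmul_eq_mul]
  cases k with
  | zero => simp
  | succ j =>
    have h1 : (j + 1 : ℕ) - 1 = j := rfl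
    rw [h1]
    push_cast
    ring

/-- Let `(W,∇)` be a formal connection with pole order `m ≥ 1` on a free
`ℂ[[z]]`-module of rank `r ≥ 1`, and `π : W ⊗ ℂ[[w]] → ℂ[[w]]` a `ℂ[[w]]`-linear map
intertwining the induced connection with `∇_ν̃` whose restriction to `W` is bijective.
For `0 ≤ k ≤ r−1`, `W_k = {a ∈ W : π(a ⊗ 1) ∈ (w^k)}` is a `∇`-invariant submodule, free of
rank `r`; `π` maps `W_k ⊗ ℂ[[w]]` into `(w^k)`, and `w^{−k}·π` is a surjection
`W_k ⊗ ℂ[[w]] → ℂ[[w]]` intertwining `∇|_{W_k}` with `∇_{ν̃ + k·dw/w}`. -/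
theorem statement11 (m r : ℕ) (hm : 1 ≤ m) (hr : 1 ≤ r)
    (W : Type*) [AddCommGroup W] [Module (PowerSeries ℂ) W]
    [Module.Finite (PowerSeries ℂ) W] [Module.Free (PowerSeries ℂ) W]
    (hrank : Module.finrank (PowerSeries ℂ) W = r)
    (Dc : W →+ W) (hDc : IsFormalConnection m Dc)
    (D : Cw r ⊗[PowerSeries ℂ] W →+ Cw r ⊗[PowerSeries ℂ] W)
    (hD : ∀ (g : Cw r) (a : W),
      D (g ⊗ₜ a) = r • ((g ⊗ₜ[PowerSeries ℂ] Dc a))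
        + (Cw.w r ^ (m * r - r + 1) * Cw.deriv g) ⊗ₜ a)
    (π : Cw r ⊗[PowerSeries ℂ] W →ₗ[Cw r] Cw r)
    (ν : Cw r)
    (hcompat : ∀ x, π (D x) =
      Cw.w r ^ (m * r - r + 1) * Cw.deriv (π x) + ν * π x)
    (hbij : Function.Bijective (fun a : W => π ((1 : Cw r) ⊗ₜ a))) :
    ∀ k : ℕ, k ≤ r - 1 →
    ∃ Wk : Submodule (PowerSeries ℂ) W,
      -- `Wk = {a ∈ W : π(a ⊗ 1) ∈ w^k ℂ[[w]]}`
      (∀ a : W, a ∈ Wk ↔ π ((1 : Cw r) ⊗ₜ a) ∈ Ideal.span {Cw.w r ^ k}) ∧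
      -- (a) `Wk` is `∇`-invariant and free of rank `r`
      (∀ a ∈ Wk, Dc a ∈ Wk) ∧
      Module.Finite (PowerSeries ℂ) ↥Wk ∧ Module.Free (PowerSeries ℂ) ↥Wk ∧
      Module.finrank (PowerSeries ℂ) ↥Wk = r ∧
      -- (b) `π` maps `Wk ⊗ ℂ[[w]]` into `w^k ℂ[[w]]`
      (∀ x : Cw r ⊗[PowerSeries ℂ] ↥Wk,
        π (LinearMap.lTensor (Cw r) Wk.subtype x) ∈ Ideal.span {Cw.w r ^ k}) ∧
      -- (c) `ρ = w^{−k} π` is surjective and intertwines `∇|_{Wk}` with `∇_{ν̃ + k w^{N−1} ω}`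
      ∃ ρ : Cw r ⊗[PowerSeries ℂ] ↥Wk → Cw r,
        (∀ x, Cw.w r ^ k * ρ x = π (LinearMap.lTensor (Cw r) Wk.subtype x)) ∧
        Function.Surjective ρ ∧
        ∀ Dck : ↥Wk →+ ↥Wk, (∀ a : ↥Wk, (Dck a : W) = Dc (a : W)) →
        ∀ Dk : Cw r ⊗[PowerSeries ℂ] ↥Wk →+ Cw r ⊗[PowerSeries ℂ] ↥Wk,
          (∀ (g : Cw r) (a : ↥Wk),
            Dk (g ⊗ₜ a) = r • (g ⊗ₜ[PowerSeries ℂ] Dck a)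
              + (Cw.w r ^ (m * r - r + 1) * Cw.deriv g) ⊗ₜ a) →
          ∀ x, ρ (Dk x) = Cw.w r ^ (m * r - r + 1) * Cw.deriv (ρ x)
            + (ν + (k : ℕ) • Cw.w r ^ (m * r - r)) * ρ x := by
  classical
  intro k hk
  haveI : IsDomain (Cw r) := inferInstanceAs (IsDomain (PowerSeries ℂ))
  have hNe : (Cw.w r : Cw r) ^ k ≠ 0 := by
    show (X : PowerSeries ℂ) ^ k ≠ 0
    exact pow_ne_zero _ X_ne_zero
  have keyCw : ∀ (u νv : Cw r),
      Cw.w r ^ (m * r - r + 1) * Cw.deriv (Cw.w r ^ k * u) + νv * (Cw.w r ^ k * u)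
        = Cw.w r ^ k * (Cw.w r ^ (m * r - r + 1) * Cw.deriv u
            + (νv + k • Cw.w r ^ (m * r - r)) * u) :=
    fun u νv => aux_key (m * r - r) k u νv
  -- the linear map φ
  let φ : W →ₗ[PowerSeries ℂ] Cw r :=
    { toFun := fun a => π ((1 : Cw r) ⊗ₜ a)
      map_add' := fun a b => by
        show π ((1 : Cw r) ⊗ₜ (a + b)) = π ((1 : Cw r) ⊗ₜ a) + π ((1 : Cw r) ⊗ₜ b)
        rw [TensorProduct.tmul_add, map_add]
      map_smul' := fun f a => by
        show π ((1 : Cw r) ⊗ₜ (f • a)) = f • π ((1 : Cw r) ⊗ₜ a)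
        rw [TensorProduct.tmul_smul, π.map_smul_of_tower] }
  have hφbij : Function.Bijective φ := hbij
  let e : W ≃ₗ[PowerSeries ℂ] Cw r := LinearEquiv.ofBijective φ hφbij
  set I : Ideal (Cw r) := Ideal.span {Cw.w r ^ k} with hI
  let Wk : Submodule (PowerSeries ℂ) W :=
    Submodule.comap φ (I.restrictScalars (PowerSeries ℂ))
  have hmem : ∀ a : W, a ∈ Wk ↔ π ((1 : Cw r) ⊗ₜ a) ∈ I := fun a => Iff.rfl
  -- key differential relation
  have hkey : ∀ a : W, ((r : ℕ) : Cw r) * φ (Dc a)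
      = Cw.w r ^ (m * r - r + 1) * Cw.deriv (φ a) + ν * φ a := by
    intro a
    have hder1 : Cw.deriv (1 : Cw r) = 0 := by
      show PowerSeries.derivative ℂ 1 = 0
      simp
    have h1 : D ((1 : Cw r) ⊗ₜ a) = r • ((1 : Cw r) ⊗ₜ[PowerSeries ℂ] Dc a) := by
      rw [hD, hder1, mul_zero, TensorProduct.zero_tmul, add_zero]
    have h2 := hcompat ((1 : Cw r) ⊗ₜ a)
    rw [h1, map_nsmul, nsmul_eq_mul] at h2
    exact h2
  have hrunit : IsUnit ((r : ℕ) : Cw r) := by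
    show IsUnit ((r : ℕ) : PowerSeries ℂ)
    rw [PowerSeries.isUnit_iff_constantCoeff]
    simp only [map_natCast]
    exact isUnit_iff_ne_zero.mpr
      (by exact_mod_cast Nat.one_le_iff_ne_zero.mp hr)
  obtain ⟨v, hv⟩ := hrunit
  -- invariance under Dc
  have hinv : ∀ a ∈ Wk, Dc a ∈ Wk := by
    intro a ha
    rw [hmem] at ha ⊢
    rw [hI, Ideal.mem_span_singleton] at ha ⊢
    obtain ⟨g, hg⟩ := ha
    have hthis := hkey a
    have hφa : φ a = Cw.w r ^ k * g := hg
    rw [hφa, keyCw g ν] at hthis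
    set H := Cw.w r ^ (m * r - r + 1) * Cw.deriv g + (ν + k • Cw.w r ^ (m * r - r)) * g
    refine ⟨↑v⁻¹ * H, ?_⟩
    have h3 : (v : Cw r) * φ (Dc a) = Cw.w r ^ k * H := by rw [hv]; exact hthis
    calc φ (Dc a) = ↑v⁻¹ * ((v : Cw r) * φ (Dc a)) := by
          rw [← mul_assoc, Units.inv_mul, one_mul]
      _ = ↑v⁻¹ * (Cw.w r ^ k * H) := by rw [h3]
      _ = Cw.w r ^ k * (↑v⁻¹ * H) := by ring
  -- the equivalences for freeness
  have hmapWk : Wk.map (e : W →ₗ[PowerSeries ℂ] Cw r) = I.restrictScalars (PowerSeries ℂ) :=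
    Submodule.map_comap_eq_of_surjective hφbij.2 _
  let e1 : ↥Wk ≃ₗ[PowerSeries ℂ] ↥(Wk.map (e : W →ₗ[PowerSeries ℂ] Cw r)) :=
    e.submoduleMap Wk
  have hmemmap : ∀ y : Cw r,
      y ∈ Wk.map (e : W →ₗ[PowerSeries ℂ] Cw r) ↔ ∃ c, y = Cw.w r ^ k * c := by
    intro y
    rw [hmapWk, Submodule.restrictScalars_mem, hI, Ideal.mem_span_singleton]
    exact Iff.rfl
  let μ : Cw r →ₗ[PowerSeries ℂ] ↥(Wk.map (e : W →ₗ[PowerSeries ℂ] Cw r)) :=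
    { toFun := fun x => ⟨Cw.w r ^ k * x, (hmemmap _).mpr ⟨x, rfl⟩⟩
      map_add' := fun x y => Subtype.ext (by show Cw.w r ^ k * (x + y) = _ + _; ring)
      map_smul' := fun f x => Subtype.ext (by
        show Cw.w r ^ k * (f • x) = f • (Cw.w r ^ k * x)
        rw [Algebra.smul_def, Algebra.smul_def]
        ring) }
  have hμbij : Function.Bijective μ := by
    constructor
    · intro x y hxy
      have h5 : Cw.w r ^ k * x = Cw.w r ^ k * y := congrArg Subtype.val hxy
      exact mul_left_cancel₀ hNe h5
    · rintro ⟨y, hy⟩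
      obtain ⟨c, hc⟩ := (hmemmap y).mp hy
      exact ⟨c, Subtype.ext hc.symm⟩
  let e2 : Cw r ≃ₗ[PowerSeries ℂ] ↥(Wk.map (e : W →ₗ[PowerSeries ℂ] Cw r)) :=
    LinearEquiv.ofBijective μ hμbij
  let eWkW : ↥Wk ≃ₗ[PowerSeries ℂ] W := (e1.trans e2.symm).trans e.symm
  have hfin : Module.Finite (PowerSeries ℂ) ↥Wk := Module.Finite.equiv eWkW.symm
  have hfree : Module.Free (PowerSeries ℂ) ↥Wk := Module.Free.of_equiv eWkW.symm
  have hfr : Module.finrank (PowerSeries ℂ) ↥Wk = r := by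
    rw [eWkW.finrank_eq, hrank]
  -- (b)
  have hb : ∀ x : Cw r ⊗[PowerSeries ℂ] ↥Wk,
      π (LinearMap.lTensor (Cw r) Wk.subtype x) ∈ I := by
    intro x
    induction x using TensorProduct.induction_on with
    | zero => rw [map_zero, map_zero]; exact I.zero_mem
    | tmul g a =>
      rw [LinearMap.lTensor_tmul]
      have h4 : (g ⊗ₜ[PowerSeries ℂ] (Wk.subtype a) : Cw r ⊗[PowerSeries ℂ] W)
          = g • ((1 : Cw r) ⊗ₜ (a : W)) := by
        rw [TensorProduct.smul_tmul', smul_eq_mul, mul_one]; rfl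
      rw [h4, map_smul, smul_eq_mul]
      exact I.mul_mem_left _ a.2
    | add x y hx hy => rw [map_add, map_add]; exact I.add_mem hx hy
  -- ρ
  have hdvd : ∀ x : Cw r ⊗[PowerSeries ℂ] ↥Wk,
      ∃ c, π (LinearMap.lTensor (Cw r) Wk.subtype x) = Cw.w r ^ k * c := by
    intro x
    have := hb x
    rw [hI, Ideal.mem_span_singleton] at this
    exact this
  let ρ : Cw r ⊗[PowerSeries ℂ] ↥Wk → Cw r := fun x => (hdvd x).choose
  have hρ : ∀ x, Cw.w r ^ k * ρ x = π (LinearMap.lTensor (Cw r) Wk.subtype x) :=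
    fun x => ((hdvd x).choose_spec).symm
  have hsurj : Function.Surjective ρ := by
    intro g
    obtain ⟨a, ha⟩ := hφbij.2 (Cw.w r ^ k * g)
    have haWk : a ∈ Wk := by
      rw [hmem, hI, Ideal.mem_span_singleton]
      exact ⟨g, ha⟩
    refine ⟨(1 : Cw r) ⊗ₜ (⟨a, haWk⟩ : ↥Wk), ?_⟩
    apply mul_left_cancel₀ hNe
    rw [hρ, LinearMap.lTensor_tmul]
    exact ha
  refine ⟨Wk, hmem, hinv, hfin, hfree, hfr, hb, ρ, hρ, hsurj, ?_⟩
  intro Dck hDck Dk hDk x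
  have hcomm : LinearMap.lTensor (Cw r) Wk.subtype (Dk x)
      = D (LinearMap.lTensor (Cw r) Wk.subtype x) := by
    induction x using TensorProduct.induction_on with
    | zero => simp
    | tmul g a =>
      rw [hDk, map_add, map_nsmul, LinearMap.lTensor_tmul, LinearMap.lTensor_tmul,
        LinearMap.lTensor_tmul, hD, Submodule.coe_subtype, hDck]
    | add x y hx hy =>
      rw [map_add, map_add, hx, hy, map_add, map_add]
  apply mul_left_cancel₀ hNe
  calc Cw.w r ^ k * ρ (Dk x) = π (LinearMap.lTensor (Cw r) Wk.subtype (Dk x)) := hρ _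
    _ = π (D (LinearMap.lTensor (Cw r) Wk.subtype x)) := by rw [hcomm]
    _ = Cw.w r ^ (m * r - r + 1) * Cw.deriv (π (LinearMap.lTensor (Cw r) Wk.subtype x))
        + ν * π (LinearMap.lTensor (Cw r) Wk.subtype x) := hcompat _
    _ = Cw.w r ^ (m * r - r + 1) * Cw.deriv (Cw.w r ^ k * ρ x) + ν * (Cw.w r ^ k * ρ x) := by
        rw [hρ]
    _ = Cw.w r ^ k * (Cw.w r ^ (m * r - r + 1) * Cw.deriv (ρ x)
        + (ν + (k : ℕ) • Cw.w r ^ (m * r - r)) * ρ x) := keyCw (ρ x) ν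

end
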